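/- Let X be a finite set, H a complex Hilbert space, and (E_{x,x',a,a'})_{x,x',a,a'∈X} a stochastic operator matrix over (X,X) acting on H. Then there exist a complex Hilbert space K, an isometry W : H → K, and a family (U_{a,x})_{a,x∈X} of bounded operators on K whose block operator matrix is a unitary operator on K^X, such that E_{x,x',a,a'} = W* U_{a,x}* U_{a',x'} W for all x, x', a, a' ∈ X. -/

import Mathlib

open scoped ComplexOrder
open ContinuousLinearMap Finset

universe u
set_option linter.unusedSectionVars false
set_option synthInstance.maxHeartbeats 1000000
set_option maxHeartbeats 1600000

noncomputable section StochDilation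

variable {H : Type u} [NormedAddCommGroup H] [InnerProductSpace ℂ H] [CompleteSpace H]
variable {X : Type} [Fintype X] [DecidableEq X]

local notation "𝕃" => PiLp 2 (fun _ : X × X => H)

instance piLpComplete : CompleteSpace (PiLp 2 (fun _ : X × X => H)) :=
  inferInstance

/-- coordinate inclusion into the big Hilbert space. -/
def sgl (p : X × X) : H →L[ℂ] 𝕃 :=
  (PiLp.continuousLinearEquiv 2 ℂ (fun _ : X × X => H)).symm.toContinuousLinearMap ∘L
    ContinuousLinearMap.pi (fun q => if q = p then ContinuousLinearMap.id ℂ H else 0)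

/-- coordinate projection from the big Hilbert space. -/
def prj (p : X × X) : 𝕃 →L[ℂ] H :=
  ContinuousLinearMap.proj p ∘L
    (PiLp.continuousLinearEquiv 2 ℂ (fun _ : X × X => H)).toContinuousLinearMap

lemma prj_apply (p : X × X) (l : 𝕃) : prj p l = l p := rfl

lemma sgl_apply (p q : X × X) (h : H) : (sgl p h : 𝕃) q = if q = p then h else 0 := by
  show (if q = p then ContinuousLinearMap.id ℂ H else 0) h = _
  split <;> rfl

lemma prj_comp_sgl (p q : X × X) :
    prj q ∘L sgl p = if q = p then (1 : H →L[ℂ] H) else 0 := by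
  ext h
  show (sgl p h : 𝕃) q = _
  rw [sgl_apply]
  split <;> rfl

lemma adjoint_sgl (p : X × X) : adjoint (sgl p (H := H) (X := X)) = prj p := by
  have h2 := (ContinuousLinearMap.eq_adjoint_iff (prj p (H := H) (X := X)) (sgl p)).mpr
  refine (h2 ?_).symm
  intro l h
  rw [PiLp.inner_apply]
  rw [prj_apply]
  have : ∀ q : X × X, (inner ℂ (l q) ((sgl p h : 𝕃) q) : ℂ)
      = if q = p then inner ℂ (l p) h else 0 := by
    intro q
    rw [sgl_apply]
    split
    · subst ‹q = p›; rfl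
    · exact inner_zero_right _
  simp only [this, Finset.sum_ite_eq' Finset.univ p, Finset.mem_univ, if_true]


lemma prj_sgl_apply (p q : X × X) (h : H) :
    prj q (sgl p h : 𝕃) = if q = p then h else 0 := by
  rw [prj_apply, sgl_apply]

variable (E : X → X → X → X → (H →L[ℂ] H))

/-- the block operator matrix with blocks `E`. -/
def bigM : 𝕃 →L[ℂ] 𝕃 :=
  ∑ p : X × X, ∑ q : X × X, sgl p ∘L ((E p.1 q.1 p.2 q.2) ∘L prj q)

lemma bigM_apply_coord (l : 𝕃) (p : X × X) :
    prj p (bigM E l) = ∑ q : X × X, E p.1 q.1 p.2 q.2 (l q) := by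
  simp only [bigM, ContinuousLinearMap.sum_apply, ContinuousLinearMap.comp_apply, map_sum,
    prj_sgl_apply]
  rw [Finset.sum_comm]
  simp [prj_apply]

lemma prj_bigM_sgl (p q : X × X) :
    prj p ∘L (bigM E ∘L sgl q) = E p.1 q.1 p.2 q.2 := by
  ext h
  simp only [ContinuousLinearMap.comp_apply, bigM_apply_coord, sgl_apply]
  simp [apply_ite, Finset.sum_ite_eq']

lemma bigM_inner (l : 𝕃) :
    (inner ℂ (bigM E l) l : ℂ)
      = ∑ x : X, ∑ a : X, ∑ x' : X, ∑ a' : X,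
          (inner ℂ (E x x' a a' (l (x', a'))) (l (x, a)) : ℂ) := by
  rw [PiLp.inner_apply]
  have h1 : ∀ p : X × X, (inner ℂ (bigM E l p) (l p) : ℂ)
      = ∑ q : X × X, (inner ℂ (E p.1 q.1 p.2 q.2 (l q)) (l p) : ℂ) := by
    intro p
    rw [show (bigM E l p) = prj p (bigM E l) from rfl, bigM_apply_coord]
    rw [sum_inner]
  rw [Finset.sum_congr rfl fun p _ => h1 p]
  rw [Fintype.sum_prod_type]
  refine Finset.sum_congr rfl fun x _ => Finset.sum_congr rfl fun a _ => ?_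
  rw [Fintype.sum_prod_type]


lemma bigM_nonneg
    (hpos : ∀ h : X → X → H,
      0 ≤ ∑ x : X, ∑ a : X, ∑ x' : X, ∑ a' : X,
            (inner ℂ (E x x' a a' (h x' a')) (h x a) : ℂ)) :
    (0 : 𝕃 →L[ℂ] 𝕃) ≤ bigM E := by
  rw [ContinuousLinearMap.nonneg_iff_isPositive, ContinuousLinearMap.isPositive_iff_complex]
  intro l
  have h0 : (0 : ℂ) ≤ inner ℂ (bigM E l) l := by
    rw [bigM_inner]
    exact hpos (fun x a => l (x, a))
  obtain ⟨hre, him⟩ := Complex.nonneg_iff.mp h0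
  refine ⟨?_, by rw [RCLike.re_to_complex]; exact hre⟩
  apply Complex.ext
  · simp only [RCLike.re_to_complex, Complex.ofReal_re]
  · simp only [RCLike.re_to_complex, Complex.ofReal_im]
    exact him

/-- the square-root column family. -/
def Sfam (p : X × X) : H →L[ℂ] 𝕃 := CFC.sqrt (bigM E) ∘L sgl p

lemma adjoint_Sfam_comp_Sfam (hM : (0 : 𝕃 →L[ℂ] 𝕃) ≤ bigM E) (p q : X × X) :
    adjoint (Sfam E p) ∘L Sfam E q = E p.1 q.1 p.2 q.2 := by
  have hsa : adjoint (CFC.sqrt (bigM E)) = CFC.sqrt (bigM E) := by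
    rw [← ContinuousLinearMap.star_eq_adjoint]
    exact IsSelfAdjoint.of_nonneg (CFC.sqrt_nonneg _)
  have hsq : CFC.sqrt (bigM E) ∘L CFC.sqrt (bigM E) = bigM E := by
    rw [← ContinuousLinearMap.mul_def]
    exact CFC.sqrt_mul_sqrt_self _ hM
  rw [Sfam, Sfam, ContinuousLinearMap.adjoint_comp, adjoint_sgl, hsa,
    ContinuousLinearMap.comp_assoc, ← ContinuousLinearMap.comp_assoc (CFC.sqrt (bigM E)),
    hsq, prj_bigM_sgl]

lemma Sfam_col (hM : (0 : 𝕃 →L[ℂ] 𝕃) ≤ bigM E)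
    (htr : ∀ x x' : X, ∑ a : X, E x x' a a = if x = x' then (1 : H →L[ℂ] H) else 0)
    (x x' : X) :
    ∑ a : X, adjoint (Sfam E (x, a)) ∘L Sfam E (x', a)
      = if x = x' then (1 : H →L[ℂ] H) else 0 := by
  simp only [adjoint_Sfam_comp_Sfam E hM]
  exact htr x x'


local notation "𝕂" => WithLp 2 (H × PiLp 2 (fun _ : X × X => H))

def inH : H →L[ℂ] 𝕂 :=
  (WithLp.prodContinuousLinearEquiv 2 ℂ H 𝕃).symm.toContinuousLinearMap ∘L
    ContinuousLinearMap.inl ℂ H 𝕃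

def inL : 𝕃 →L[ℂ] 𝕂 :=
  (WithLp.prodContinuousLinearEquiv 2 ℂ H 𝕃).symm.toContinuousLinearMap ∘L
    ContinuousLinearMap.inr ℂ H 𝕃

def prH : 𝕂 →L[ℂ] H :=
  ContinuousLinearMap.fst ℂ H 𝕃 ∘L
    (WithLp.prodContinuousLinearEquiv 2 ℂ H 𝕃).toContinuousLinearMap

def prL : 𝕂 →L[ℂ] 𝕃 :=
  ContinuousLinearMap.snd ℂ H 𝕃 ∘L
    (WithLp.prodContinuousLinearEquiv 2 ℂ H 𝕃).toContinuousLinearMap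

lemma prH_inH (h : H) : prH (inH h : 𝕂) = h := rfl
lemma prH_inL (l : 𝕃) : prH (inL l : 𝕂) = 0 := rfl
lemma prL_inH (h : H) : prL (inH h : 𝕂) = 0 := rfl
lemma prL_inL (l : 𝕃) : prL (inL l : 𝕂) = l := rfl

lemma K_ext {x y : 𝕂} (h1 : prH x = prH y) (h2 : prL x = prL y) : x = y :=
  (WithLp.prodContinuousLinearEquiv 2 ℂ H 𝕃).injective (Prod.ext h1 h2)

lemma K_fst (x : 𝕂) : (WithLp.ofLp x).1 = prH x := rfl
lemma K_snd (x : 𝕂) : (WithLp.ofLp x).2 = prL x := rfl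

lemma adjoint_inH : adjoint (inH (H := H) (X := X)) = prH := by
  have h2 := (ContinuousLinearMap.eq_adjoint_iff (prH (H := H) (X := X)) inH).mpr
  refine (h2 ?_).symm
  intro k h
  rw [WithLp.prod_inner_apply]
  simp only [K_fst, K_snd, prH_inH, prL_inH]
  rw [inner_zero_right, add_zero]

lemma adjoint_inL : adjoint (inL (H := H) (X := X)) = prL := by
  have h2 := (ContinuousLinearMap.eq_adjoint_iff (prL (H := H) (X := X)) inL).mpr
  refine (h2 ?_).symm
  intro k h
  rw [WithLp.prod_inner_apply]
  simp only [K_fst, K_snd, prH_inL, prL_inL]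
  rw [inner_zero_right, zero_add]

lemma norm_inH (h : H) : ‖(inH h : 𝕂)‖ = ‖h‖ := by
  have hi : (inner ℂ (inH h : 𝕂) (inH h : 𝕂) : ℂ) = inner ℂ h h := by
    rw [WithLp.prod_inner_apply]
    simp only [K_fst, K_snd, prH_inH, prL_inH]
    rw [inner_zero_right, add_zero]
  rw [norm_eq_sqrt_re_inner (𝕜 := ℂ) (inH h : 𝕂), hi, ← norm_eq_sqrt_re_inner (𝕜 := ℂ) h]


lemma adjoint_prH : adjoint (prH (H := H) (X := X)) = inH := by
  rw [← adjoint_inH, adjoint_adjoint]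

lemma adjoint_prL : adjoint (prL (H := H) (X := X)) = inL := by
  rw [← adjoint_inL, adjoint_adjoint]

/-- 2×2 block operator on `𝕂`. -/
def blk (D : H →L[ℂ] H) (A : 𝕃 →L[ℂ] H) (B : H →L[ℂ] 𝕃) (C : 𝕃 →L[ℂ] 𝕃) : 𝕂 →L[ℂ] 𝕂 :=
  inH ∘L (D ∘L prH) + inH ∘L (A ∘L prL) + inL ∘L (B ∘L prH) + inL ∘L (C ∘L prL)

lemma prH_blk (D : H →L[ℂ] H) (A : 𝕃 →L[ℂ] H) (B : H →L[ℂ] 𝕃) (C : 𝕃 →L[ℂ] 𝕃) (k : 𝕂) :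
    prH (blk D A B C k) = D (prH k) + A (prL k) := by
  simp only [blk, ContinuousLinearMap.add_apply, ContinuousLinearMap.comp_apply, map_add,
    prH_inH, prH_inL, add_zero, zero_add]

lemma prL_blk (D : H →L[ℂ] H) (A : 𝕃 →L[ℂ] H) (B : H →L[ℂ] 𝕃) (C : 𝕃 →L[ℂ] 𝕃) (k : 𝕂) :
    prL (blk D A B C k) = B (prH k) + C (prL k) := by
  simp only [blk, ContinuousLinearMap.add_apply, ContinuousLinearMap.comp_apply, map_add,
    prL_inH, prL_inL, add_zero, zero_add]

lemma blk_comp (D : H →L[ℂ] H) (A : 𝕃 →L[ℂ] H) (B : H →L[ℂ] 𝕃) (C : 𝕃 →L[ℂ] 𝕃)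
    (D' : H →L[ℂ] H) (A' : 𝕃 →L[ℂ] H) (B' : H →L[ℂ] 𝕃) (C' : 𝕃 →L[ℂ] 𝕃) :
    blk D A B C ∘L blk D' A' B' C'
      = blk (D ∘L D' + A ∘L B') (D ∘L A' + A ∘L C')
          (B ∘L D' + C ∘L B') (B ∘L A' + C ∘L C') := by
  refine ContinuousLinearMap.ext fun k => K_ext ?_ ?_ <;>
    simp only [ContinuousLinearMap.comp_apply, prH_blk, prL_blk,
      ContinuousLinearMap.add_apply, map_add] <;> abel

lemma blk_adjoint (D : H →L[ℂ] H) (A : 𝕃 →L[ℂ] H) (B : H →L[ℂ] 𝕃) (C : 𝕃 →L[ℂ] 𝕃) :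
    adjoint (blk D A B C) = blk (adjoint D) (adjoint B) (adjoint A) (adjoint C) := by
  simp only [blk, map_add, ContinuousLinearMap.adjoint_comp, adjoint_prH, adjoint_prL,
    adjoint_inH, adjoint_inL, ContinuousLinearMap.comp_assoc]
  abel

lemma blk_sum {ι : Type} (s : Finset ι)
    (D : ι → (H →L[ℂ] H)) (A : ι → (𝕃 →L[ℂ] H)) (B : ι → (H →L[ℂ] 𝕃)) (C : ι → (𝕃 →L[ℂ] 𝕃)) :
    ∑ i ∈ s, blk (D i) (A i) (B i) (C i)
      = blk (∑ i ∈ s, D i) (∑ i ∈ s, A i) (∑ i ∈ s, B i) (∑ i ∈ s, C i) := by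
  refine ContinuousLinearMap.ext fun k => K_ext ?_ ?_ <;>
    simp only [ContinuousLinearMap.sum_apply, map_sum, prH_blk, prL_blk,
      Finset.sum_add_distrib]

lemma blk_one : blk (1 : H →L[ℂ] H) 0 0 (1 : 𝕃 →L[ℂ] 𝕃) = (1 : 𝕂 →L[ℂ] 𝕂) := by
  refine ContinuousLinearMap.ext fun k => K_ext ?_ ?_ <;>
    simp [prH_blk, prL_blk]

lemma blk_zero : blk (0 : H →L[ℂ] H) 0 0 (0 : 𝕃 →L[ℂ] 𝕃) = (0 : 𝕂 →L[ℂ] 𝕂) := by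
  refine ContinuousLinearMap.ext fun k => K_ext ?_ ?_ <;>
    simp [prH_blk, prL_blk]

lemma prH_comp_blk_comp_inH (D : H →L[ℂ] H) (A : 𝕃 →L[ℂ] H) (B : H →L[ℂ] 𝕃) (C : 𝕃 →L[ℂ] 𝕃) :
    prH ∘L (blk D A B C ∘L inH) = D := by
  refine ContinuousLinearMap.ext fun h => ?_
  simp [ContinuousLinearMap.comp_apply, prH_blk, prH_inH, prL_inH]


/-- row/column operators `P_{a,x} = Σ_y S_{(y,a)} S_{(y,x)}^*`. -/
def Pop (a x : X) : 𝕃 →L[ℂ] 𝕃 := ∑ y : X, Sfam E (y, a) ∘L adjoint (Sfam E (y, x))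

def Rop (a x : X) : 𝕃 →L[ℂ] 𝕃 := (if a = x then (1 : 𝕃 →L[ℂ] 𝕃) else 0) - Pop E a x

lemma adjoint_one' : adjoint (1 : 𝕃 →L[ℂ] 𝕃) = 1 := by
  rw [← ContinuousLinearMap.star_eq_adjoint, star_one]

lemma Pop_adjoint (a x : X) : adjoint (Pop E a x) = Pop E x a := by
  rw [Pop, map_sum, Pop]
  refine Finset.sum_congr rfl fun y _ => ?_
  rw [ContinuousLinearMap.adjoint_comp, adjoint_adjoint]

lemma Rop_adjoint (a x : X) : adjoint (Rop E a x) = Rop E x a := by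
  rw [Rop, Rop, map_sub, Pop_adjoint]
  congr 1
  rcases eq_or_ne a x with h | h
  · subst h; simp [adjoint_one']
  · rw [if_neg h, if_neg (Ne.symm h), map_zero]

section withHc

variable (hc : ∀ x x' : X, ∑ a : X, adjoint (Sfam E (x, a)) ∘L Sfam E (x', a)
    = if x = x' then (1 : H →L[ℂ] H) else 0)

include hc

lemma keyA {β : Type u} [NormedAddCommGroup β] [NormedSpace ℂ β]
    (G : X → (β →L[ℂ] H)) (x : X) :
    ∑ a : X, adjoint (Sfam E (x, a)) ∘L (∑ y : X, Sfam E (y, a) ∘L G y) = G x := by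
  have h1 : ∀ a : X, adjoint (Sfam E (x, a)) ∘L (∑ y : X, Sfam E (y, a) ∘L G y)
      = ∑ y : X, (adjoint (Sfam E (x, a)) ∘L Sfam E (y, a)) ∘L G y := by
    intro a
    rw [ContinuousLinearMap.comp_finset_sum]
    exact Finset.sum_congr rfl fun y _ => (ContinuousLinearMap.comp_assoc _ _ _).symm
  simp only [h1]
  rw [Finset.sum_comm]
  have h2 : ∀ y : X, ∑ a : X, (adjoint (Sfam E (x, a)) ∘L Sfam E (y, a)) ∘L G y
      = if x = y then G y else 0 := by
    intro y
    rw [← ContinuousLinearMap.finset_sum_comp, hc]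
    split <;> simp [ContinuousLinearMap.one_def]
  simp only [h2]
  simp [Finset.sum_ite_eq]

lemma keyA' (x x' : X) :
    ∑ a : X, adjoint (Sfam E (x, a)) ∘L Pop E a x' = adjoint (Sfam E (x, x')) := by
  have := keyA E hc (fun y => adjoint (Sfam E (y, x'))) x
  simpa only [Pop] using this

lemma c2 (x x' : X) : ∑ a : X, adjoint (Sfam E (x, a)) ∘L Rop E a x' = 0 := by
  simp only [Rop, ContinuousLinearMap.comp_sub]
  rw [Finset.sum_sub_distrib, keyA' E hc]
  have h3 : ∀ a : X, adjoint (Sfam E (x, a)) ∘L (if a = x' then (1 : 𝕃 →L[ℂ] 𝕃) else 0)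
      = if a = x' then adjoint (Sfam E (x, a)) else 0 := by
    intro a; split <;> simp [ContinuousLinearMap.one_def]
  simp only [h3]
  rw [Finset.sum_ite_eq' Finset.univ x']
  simp

lemma c3 (x x' : X) : ∑ a : X, Rop E x a ∘L Sfam E (x', a) = 0 := by
  have h := c2 E hc x' x
  have h2 : adjoint (∑ a : X, adjoint (Sfam E (x', a)) ∘L Rop E a x)
      = adjoint (0 : 𝕃 →L[ℂ] H) := by rw [h]
  rw [map_sum, map_zero] at h2
  simp only [ContinuousLinearMap.adjoint_comp, adjoint_adjoint, Rop_adjoint] at h2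
  exact h2

lemma PopPop (x x' : X) : ∑ a : X, Pop E x a ∘L Pop E a x' = Pop E x x' := by
  have h1 : ∀ a : X, Pop E x a ∘L Pop E a x'
      = ∑ y : X, Sfam E (y, x) ∘L (adjoint (Sfam E (y, a)) ∘L Pop E a x') := by
    intro a
    rw [Pop, ContinuousLinearMap.finset_sum_comp]
    exact Finset.sum_congr rfl fun y _ => ContinuousLinearMap.comp_assoc _ _ _
  simp only [h1]
  rw [Finset.sum_comm]
  have h2 : ∀ y : X, ∑ a : X, Sfam E (y, x) ∘L (adjoint (Sfam E (y, a)) ∘L Pop E a x')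
      = Sfam E (y, x) ∘L adjoint (Sfam E (y, x')) := by
    intro y
    rw [← ContinuousLinearMap.comp_finset_sum, keyA' E hc]
  simp only [h2]
  rfl

lemma c4 (x x' : X) :
    ∑ a : X, (Sfam E (a, x) ∘L adjoint (Sfam E (a, x')) + Rop E x a ∘L Rop E a x')
      = if x = x' then (1 : 𝕃 →L[ℂ] 𝕃) else 0 := by
  rw [Finset.sum_add_distrib]
  have e1 : ∑ a : X, Sfam E (a, x) ∘L adjoint (Sfam E (a, x')) = Pop E x x' := rfl
  have e2 : ∑ a : X, Rop E x a ∘L Rop E a x'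
      = (if x = x' then (1 : 𝕃 →L[ℂ] 𝕃) else 0) - Pop E x x' := by
    have expand : ∀ a : X, Rop E x a ∘L Rop E a x'
        = ((if x = a then (1 : 𝕃 →L[ℂ] 𝕃) else 0) ∘L (if a = x' then (1 : 𝕃 →L[ℂ] 𝕃) else 0)
            - (if x = a then Pop E a x' else 0))
          - ((if a = x' then Pop E x a else 0) - Pop E x a ∘L Pop E a x') := by
      intro a
      rw [Rop, Rop, ContinuousLinearMap.sub_comp, ContinuousLinearMap.comp_sub,
        ContinuousLinearMap.comp_sub]
      congr 2
      · split <;> simp [ContinuousLinearMap.one_def]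
      · split <;> simp [ContinuousLinearMap.one_def]
    simp only [expand]
    rw [Finset.sum_sub_distrib, Finset.sum_sub_distrib, Finset.sum_sub_distrib, PopPop E hc]
    have e3 : ∑ a : X, (if x = a then (1 : 𝕃 →L[ℂ] 𝕃) else 0) ∘L (if a = x' then (1 : 𝕃 →L[ℂ] 𝕃) else 0)
        = if x = x' then (1 : 𝕃 →L[ℂ] 𝕃) else 0 := by
      have : ∀ a : X, (if x = a then (1 : 𝕃 →L[ℂ] 𝕃) else 0) ∘L (if a = x' then (1 : 𝕃 →L[ℂ] 𝕃) else 0)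
          = if x = a then (if a = x' then (1 : 𝕃 →L[ℂ] 𝕃) else 0) else 0 := by
        intro a; split <;> split <;> simp [ContinuousLinearMap.one_def]
      simp only [this]
      rw [Finset.sum_ite_eq Finset.univ x]
      simp
    have e4 : ∑ a : X, (if x = a then Pop E a x' else 0) = Pop E x x' := by
      rw [Finset.sum_ite_eq Finset.univ x]; simp
    have e5 : ∑ a : X, (if a = x' then Pop E x a else 0) = Pop E x x' := by
      rw [Finset.sum_ite_eq' Finset.univ x']; simp
    rw [e3, e4, e5]
    abel
  rw [e1, e2]
  abel


end withHc

/-- the unitary block family. -/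
def Ufam (a x : X) : 𝕂 →L[ℂ] 𝕂 :=
  blk 0 (adjoint (Sfam E (a, x))) (Sfam E (x, a)) (Rop E a x)

lemma Ufam_adjoint (a x : X) : adjoint (Ufam E a x) = Ufam E x a := by
  rw [Ufam, blk_adjoint, adjoint_adjoint, Rop_adjoint, Ufam]
  simp only [map_zero]

lemma Ufam_comp (x a x' a' : X) :
    Ufam E x a ∘L Ufam E a' x'
      = blk (adjoint (Sfam E (x, a)) ∘L Sfam E (x', a'))
          (adjoint (Sfam E (x, a)) ∘L Rop E a' x')
          (Rop E x a ∘L Sfam E (x', a'))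
          (Sfam E (a, x) ∘L adjoint (Sfam E (a', x')) + Rop E x a ∘L Rop E a' x') := by
  rw [Ufam, Ufam, blk_comp]
  congr 1 <;> [skip; skip; skip]
  all_goals simp only [ContinuousLinearMap.zero_comp, ContinuousLinearMap.comp_zero,
    zero_add, add_zero]

lemma Ufam_col (hc : ∀ x x' : X, ∑ a : X, adjoint (Sfam E (x, a)) ∘L Sfam E (x', a)
      = if x = x' then (1 : H →L[ℂ] H) else 0) (x x' : X) :
    ∑ a : X, adjoint (Ufam E a x) ∘L Ufam E a x'
      = if x = x' then (1 : 𝕂 →L[ℂ] 𝕂) else 0 := by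
  simp only [Ufam_adjoint]
  have hcomp : ∀ a : X, Ufam E x a ∘L Ufam E a x'
      = blk (adjoint (Sfam E (x, a)) ∘L Sfam E (x', a))
          (adjoint (Sfam E (x, a)) ∘L Rop E a x')
          (Rop E x a ∘L Sfam E (x', a))
          (Sfam E (a, x) ∘L adjoint (Sfam E (a, x')) + Rop E x a ∘L Rop E a x') :=
    fun a => Ufam_comp E x a x' a
  simp only [hcomp]
  rw [blk_sum Finset.univ, hc x x', c2 E hc x x', c3 E hc x x', c4 E hc x x']
  rcases eq_or_ne x x' with h | h
  · subst h; simp [blk_one]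
  · simp only [if_neg h, blk_zero]

lemma Ufam_entry (hM : (0 : 𝕃 →L[ℂ] 𝕃) ≤ bigM E) (x x' a a' : X) :
    prH ∘L ((adjoint (Ufam E a x) ∘L Ufam E a' x') ∘L inH) = E x x' a a' := by
  rw [Ufam_adjoint, Ufam_comp, prH_comp_blk_comp_inH]
  rw [adjoint_Sfam_comp_Sfam E hM (x, a) (x', a')]

end StochDilation

/-- Every stochastic operator matrix `(E_{x,x',a,a'})` over `(X,X)` acting on a complex
Hilbert space `H` (block-positivity expressed through the quadratic form, together with the
partial-trace condition `Σ_a E_{x,x',a,a} = δ_{x,x'} 1`) dilates to a unistochastic one: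
there are a Hilbert space `K`, an isometry `W : H → K` and a family `(U_{a,x})` whose block
operator matrix is unitary (expressed by `Σ_a U_{a,x}* U_{a,x'} = δ_{x,x'} 1` and
`Σ_x U_{a,x} U_{a',x}* = δ_{a,a'} 1`) with `E_{x,x',a,a'} = W* U_{a,x}* U_{a',x'} W`. -/
theorem stmt_17 {H : Type u} [NormedAddCommGroup H] [InnerProductSpace ℂ H]
    [CompleteSpace H]
    (X : Type) [Fintype X] [DecidableEq X]
    (E : X → X → X → X → (H →L[ℂ] H))
    (hpos : ∀ h : X → X → H,
      0 ≤ ∑ x : X, ∑ a : X, ∑ x' : X, ∑ a' : X,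
            (inner ℂ (E x x' a a' (h x' a')) (h x a) : ℂ))
    (htr : ∀ x x' : X, ∑ a : X, E x x' a a = if x = x' then (1 : H →L[ℂ] H) else 0) :
    ∃ (K : Type u) (_ : NormedAddCommGroup K) (_ : InnerProductSpace ℂ K)
      (_ : CompleteSpace K) (W : H →L[ℂ] K) (U : X → X → K →L[ℂ] K),
      (∀ h : H, ‖W h‖ = ‖h‖) ∧
      (∀ x x' : X, ∑ a : X, ContinuousLinearMap.adjoint (U a x) ∘L U a x'
          = if x = x' then (1 : K →L[ℂ] K) else 0) ∧
      (∀ a a' : X, ∑ x : X, U a x ∘L ContinuousLinearMap.adjoint (U a' x)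
          = if a = a' then (1 : K →L[ℂ] K) else 0) ∧
      (∀ x x' a a' : X,
        E x x' a a' = ContinuousLinearMap.adjoint W ∘L
          (ContinuousLinearMap.adjoint (U a x) ∘L U a' x') ∘L W) := by
  classical
  have hM := bigM_nonneg E hpos
  have hc := Sfam_col E hM htr
  refine ⟨WithLp 2 (H × PiLp 2 (fun _ : X × X => H)), inferInstance, inferInstance,
    inferInstance, inH, fun a x => Ufam E a x, ?_, ?_, ?_, ?_⟩
  · exact norm_inH
  · exact fun x x' => Ufam_col E hc x x'
  · intro a a'
    have h := Ufam_col E hc a a'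
    simp only [Ufam_adjoint] at h ⊢
    exact h
  · intro x x' a a'
    have h := Ufam_entry E hM x x' a a'
    rw [adjoint_inH]
    exact h.symm
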